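/- Comparison of the delay terms of the split and the unsplit solution: In the linear delay framework below, assume additionally that there exist σ₀ ∈ (-1,0) and κ > 0 such that the restriction of μ to [σ₀,0] is absolutely continuous with respect to Lebesgue measure with density bounded by κ. Then there is a constant C > 0, independent of the initial data, such that for every (x,f) ∈ D(𝒢) and every t ∈ [0,−σ₀]: ‖Φu_t − Φv_t‖_H ≤ C t · max{‖f‖_{L^p([-1,0];H)}, ‖x‖_H}, where (u(t),u_t) := 𝒯(t)(x,f) and (v(t),v_t) := 𝒯₂(t)(x,f). -/

import Mathlib

open MeasureTheory Filter Set

noncomputable section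

/-- Lebesgue measure on `[-1,0]`. -/
def lam : Measure ℝ := volume.restrict (Set.Icc (-1) 0)

/-- Graph of the generator of a strongly continuous semigroup. -/
def genGraph {E : Type*} [NormedAddCommGroup E] [NormedSpace ℝ E]
    (T : ℝ → E →L[ℝ] E) : Set (E × E) :=
  {q | Tendsto (fun t : ℝ => t⁻¹ • (T t q.1 - q.1)) (nhdsWithin 0 (Set.Ioi 0)) (nhds q.2)}

/-- A strongly continuous semigroup of bounded linear operators. -/
def IsC0Semigroup {E : Type*} [NormedAddCommGroup E] [NormedSpace ℝ E]
    (T : ℝ → E →L[ℝ] E) : Prop :=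
  T 0 = 1 ∧ (∀ s, 0 ≤ s → ∀ t, 0 ≤ t → T (s + t) = (T s).comp (T t)) ∧
    ∀ x, ContinuousOn (fun t => T t x) (Set.Ici (0:ℝ))

/-- A strongly continuous contraction semigroup. -/
def IsC0Contraction {E : Type*} [NormedAddCommGroup E] [NormedSpace ℝ E]
    (T : ℝ → E →L[ℝ] E) : Prop :=
  IsC0Semigroup T ∧ ∀ t, 0 ≤ t → ∀ x, ‖T t x‖ ≤ ‖x‖

variable {H : Type*} [NormedAddCommGroup H] [InnerProductSpace ℝ H] [CompleteSpace H]

/-- `F` is an absolutely continuous function on `[-1,0]` with derivative `F'` of class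
`L^p`; this encodes membership of (the class of) `F` in `W^{1,p}([-1,0];H)`. -/
def IsW1pRep (p : ℝ) (F F' : ℝ → H) : Prop :=
  MemLp F' (ENNReal.ofReal p) lam ∧
    ∀ σ ∈ Set.Icc (-1:ℝ) 0, F σ = F (-1) + ∫ s in Set.Icc (-1:ℝ) σ, F' s

/-- The state space `ℰ = H × L^p([-1,0];H)` of the delay equation. -/
abbrev DelayE (H : Type*) [NormedAddCommGroup H] (p : ℝ) :=
  H × Lp H (ENNReal.ofReal p) lam

/-- The delay operator `Φ F = ∫ k(σ) F(σ) dμ(σ)` (Riemann–Stieltjes operator in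
total-variation-measure form). -/
def Phi (μ : Measure ℝ) (k : ℝ → H →L[ℝ] H) (F : ℝ → H) : H := ∫ σ, k σ (F σ) ∂μ

/-- The `p`-product norm `‖(x,f)‖_ℰ = (‖x‖^p + ‖f‖_{L^p}^p)^{1/p}` on `ℰ`. -/
def Enorm (p : ℝ) (q : DelayE H p) : ℝ := (‖q.1‖ ^ p + ‖q.2‖ ^ p) ^ (1 / p)

/-- The graph of the delay operator matrix `𝒢(x,f) = (Bx + Φf, f')` with domain
`{(x,f) : x ∈ D(B), f ∈ W^{1,p}([-1,0];H), f(0) = x}`, where `B` is the generator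
of the semigroup `V`. -/
def delayGraph (p : ℝ) (V : ℝ → H →L[ℝ] H) (μ : Measure ℝ) (k : ℝ → H →L[ℝ] H) :
    Set (DelayE H p × DelayE H p) :=
  {q | ∃ F F' : ℝ → H,
    (∀ᵐ σ ∂lam, q.1.2 σ = F σ) ∧ (∀ᵐ σ ∂lam, q.2.2 σ = F' σ) ∧
    IsW1pRep p F F' ∧ F 0 = q.1.1 ∧
    (q.1.1, q.2.1 - Phi μ k F) ∈ genGraph V}

/-- The graph of the operator `𝒜₂(x,f) = (Φf, f')` with domain
`{(x,f) : f ∈ W^{1,p}([-1,0];H), f(0) = x}`. -/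
def shiftGraph (p : ℝ) (μ : Measure ℝ) (k : ℝ → H →L[ℝ] H) :
    Set (DelayE H p × DelayE H p) :=
  {q | ∃ F F' : ℝ → H,
    (∀ᵐ σ ∂lam, q.1.2 σ = F σ) ∧ (∀ᵐ σ ∂lam, q.2.2 σ = F' σ) ∧
    IsW1pRep p F F' ∧ F 0 = q.1.1 ∧ q.2.1 = Phi μ k F}

/-- The pointwise history segment `u_t` of the orbit of `(x,f) = q` under `T`:
`u_t(σ) = u(t+σ)` if `t+σ > 0` and `u_t(σ) = f(t+σ)` otherwise, where
`u(s) = 𝒫₁ T(s) q` and `F` is the chosen representative of `f`. -/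
def histFun (p : ℝ) [Fact (1 ≤ ENNReal.ofReal p)]
    (T : ℝ → DelayE H p →L[ℝ] DelayE H p) (q : DelayE H p) (F : ℝ → H)
    (t σ : ℝ) : H :=
  if 0 < t + σ then (T (t + σ) q).1 else F (t + σ)

/-- The semigroup `T` on `ℰ` satisfies the history (translation) formula. -/
def HistoryFormula (p : ℝ) [Fact (1 ≤ ENNReal.ofReal p)]
    (T : ℝ → DelayE H p →L[ℝ] DelayE H p) : Prop :=
  ∀ q : DelayE H p, ∀ t, 0 ≤ t → ∀ F : ℝ → H, (∀ᵐ σ ∂lam, q.2 σ = F σ) →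
    ∀ᵐ σ ∂lam, (T t q).2 σ = histFun p T q F t σ

/-- The smallest Lipschitz constant of `F` on `[-1,0]`. -/
def lipConst (F : ℝ → H) : ℝ :=
  sInf {L | 0 ≤ L ∧ ∀ σ₁ ∈ Set.Icc (-1:ℝ) 0, ∀ σ₂ ∈ Set.Icc (-1:ℝ) 0,
    ‖F σ₁ - F σ₂‖ ≤ L * |σ₁ - σ₂|}

/-- The Lipschitz norm `‖f‖_{Lip(H)} = sup_σ ‖F(σ)‖ + Lip(F)`. -/
def LipNormH (F : ℝ → H) : ℝ := (⨆ σ : Set.Icc (-1:ℝ) 0, ‖F (σ : ℝ)‖) + lipConst F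

/-- The `L^p([-1,0];H)` norm of a representative. -/
def LpNormOn (p : ℝ) (F : ℝ → H) : ℝ :=
  (∫ σ in Set.Icc (-1:ℝ) 0, ‖F σ‖ ^ p) ^ (1 / p)

/-- The `W^{1,p}([-1,0];H)` norm `‖f‖ = ‖f‖_{L^p} + ‖f'‖_{L^p}`. -/
def W1pNormH (p : ℝ) (F F' : ℝ → H) : ℝ := LpNormOn p F + LpNormOn p F'

/-- The `L^p([-1,0];D(B))` norm of a representative, computed through the graph norm
of `B` (the function `BF` records the pointwise values `B(F(σ))`). -/
def LpNormB (p : ℝ) (F BF : ℝ → H) : ℝ :=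
  (∫ σ in Set.Icc (-1:ℝ) 0, (‖F σ‖ + ‖BF σ‖) ^ p) ^ (1 / p)

/-- The `W^{1,p}([-1,0];D(B))` norm. -/
def W1pNormB (p : ℝ) (F F' BF BF' : ℝ → H) : ℝ := LpNormB p F BF + LpNormB p F' BF'

/-- Membership of `(x,f) = q` in the regularity class
`𝒟 = {(x,f) : x ∈ D(B²), f ∈ W^{1,p}([-1,0];D(B)), f Lipschitz into H, f(0) = x}`,
witnessed by a representative `F` of `f`, a representative `F'` of its derivative,
the pointwise values `BF = B∘F`, `BF' = B∘F'` and the vectors `Bx = Bx`, `B2x = B²x`,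
where `B` is the generator of `V`. -/
def DMem (p : ℝ) (V : ℝ → H →L[ℝ] H) (q : DelayE H p) (F F' BF BF' : ℝ → H)
    (Bx B2x : H) : Prop :=
  (∀ᵐ σ ∂lam, q.2 σ = F σ) ∧
  IsW1pRep p F F' ∧
  F 0 = q.1 ∧
  (q.1, Bx) ∈ genGraph V ∧ (Bx, B2x) ∈ genGraph V ∧
  (∀ σ ∈ Set.Icc (-1:ℝ) 0, (F σ, BF σ) ∈ genGraph V) ∧
  (∀ σ ∈ Set.Icc (-1:ℝ) 0, (F' σ, BF' σ) ∈ genGraph V) ∧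
  (∀ σ ∈ Set.Icc (-1:ℝ) 0, BF σ = BF (-1) + ∫ s in Set.Icc (-1:ℝ) σ, BF' s) ∧
  MemLp BF' (ENNReal.ofReal p) lam ∧
  (∃ L, 0 ≤ L ∧ ∀ σ₁ ∈ Set.Icc (-1:ℝ) 0, ∀ σ₂ ∈ Set.Icc (-1:ℝ) 0,
    ‖F σ₁ - F σ₂‖ ≤ L * |σ₁ - σ₂|)

/-- The norm `‖(x,f)‖_𝒟 = ‖x‖_B + ‖Bx‖_B + ‖f‖_{W^{1,p}(D(B))} + ‖f‖_{Lip(H)}`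
computed from the witnesses. -/
def DNorm (p : ℝ) (q : DelayE H p) (F F' BF BF' : ℝ → H) (Bx B2x : H) : ℝ :=
  (‖q.1‖ + ‖Bx‖) + (‖Bx‖ + ‖B2x‖) + W1pNormB p F F' BF BF' + LipNormH F

/-- Auxiliary: applying a SOT-measurable operator family to a simple function is
strongly measurable. -/
lemma sm_apply_simple {H : Type*} [NormedAddCommGroup H] [NormedSpace ℝ H]
    (k : ℝ → H →L[ℝ] H) (hk : ∀ x : H, StronglyMeasurable fun σ => k σ x)
    (f : SimpleFunc ℝ H) : StronglyMeasurable fun σ => k σ (f σ) := by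
  induction f using SimpleFunc.induction with
  | @const c s hs =>
    have heq : (fun σ => k σ ((SimpleFunc.piecewise s hs (SimpleFunc.const ℝ c)
        (SimpleFunc.const ℝ 0)) σ)) = Set.indicator s (fun σ => k σ c) := by
      funext σ
      by_cases hσ : σ ∈ s <;>
        simp [SimpleFunc.piecewise_apply, Set.indicator, hσ]
    rw [heq]
    exact (hk c).indicator hs
  | @add f g _ hf hg =>
    have heq : (fun σ => k σ ((f + g) σ)) = fun σ => k σ (f σ) + k σ (g σ) := by
      funext σ; simp
    rw [heq]
    exact hf.add hg

/-- Auxiliary: applying a SOT-measurable operator family to a continuous function is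
strongly measurable. -/
lemma sm_apply_cont {H : Type*} [NormedAddCommGroup H] [NormedSpace ℝ H]
    (k : ℝ → H →L[ℝ] H) (hk : ∀ x : H, StronglyMeasurable fun σ => k σ x)
    {g : ℝ → H} (hg : Continuous g) : StronglyMeasurable fun σ => k σ (g σ) := by
  have hgm : StronglyMeasurable g := hg.stronglyMeasurable
  refine stronglyMeasurable_of_tendsto (f := fun n σ => k σ (hgm.approx n σ)) atTop
    (fun n => sm_apply_simple k hk _) ?_
  rw [tendsto_pi_nhds]
  intro σ
  exact ((k σ).continuous.tendsto (g σ)).comp (hgm.tendsto_approx σ)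

/-- Comparison of the delay terms `Φu_t` and `Φv_t` of the unsplit and the split
solutions. -/
theorem delay_terms_comparison
    {H : Type*} [NormedAddCommGroup H] [InnerProductSpace ℝ H] [CompleteSpace H]
    (p : ℝ) (hp : 1 < p) [Fact (1 ≤ ENNReal.ofReal p)]
    (V : ℝ → H →L[ℝ] H) (hV : IsC0Contraction V)
    (hVdense : Dense {x : H | ∃ y, (x, y) ∈ genGraph V})
    (μ : Measure ℝ) [IsFiniteMeasure μ]
    (hμsupp : μ (Set.Icc (-1:ℝ) 0)ᶜ = 0) (hμatom : 0 < μ {(-1:ℝ)})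
    (k : ℝ → H →L[ℝ] H)
    (hkmeas : ∀ x : H, MeasureTheory.StronglyMeasurable fun σ => k σ x)
    (hknorm : ∀ σ, ‖k σ‖ ≤ 1)
    -- additional regularity: on `[σ₀,0]` the measure `μ` is absolutely continuous
    -- with density bounded by `κ`:
    (σ₀ : ℝ) (hσ₀ : σ₀ ∈ Set.Ioo (-1:ℝ) 0) (κ : ℝ) (hκ : 0 < κ)
    (habs : ∀ E : Set ℝ, MeasurableSet E →
      μ (E ∩ Set.Icc σ₀ 0) ≤ ENNReal.ofReal κ * volume (E ∩ Set.Icc σ₀ 0))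
    (𝒯 𝒯₂ : ℝ → DelayE H p →L[ℝ] DelayE H p)
    (h𝒯sg : IsC0Semigroup 𝒯) (h𝒯₂sg : IsC0Semigroup 𝒯₂)
    (hgen𝒯 : genGraph 𝒯 = delayGraph p V μ k)
    (hgen𝒯₂ : genGraph 𝒯₂ = shiftGraph p μ k)
    (hhist : HistoryFormula p 𝒯) (hhist₂ : HistoryFormula p 𝒯₂) :
    ∃ C : ℝ, 0 < C ∧
      ∀ q : DelayE H p, (∃ y, (q.1, y) ∈ genGraph V) →
      ∀ F F' : ℝ → H, (∀ᵐ σ ∂lam, q.2 σ = F σ) → IsW1pRep p F F' → F 0 = q.1 →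
      ∀ t ∈ Set.Icc (0:ℝ) (-σ₀),
        ‖Phi μ k (histFun p 𝒯 q F t) - Phi μ k (histFun p 𝒯₂ q F t)‖ ≤
          C * t * max ‖q.2‖ ‖q.1‖ := by
  -- uniform bound on the operator norms of `𝒯 s`, `𝒯₂ s` for `s ∈ [0, -σ₀]`
  have hbdd : ∃ M0 : ℝ, ∀ i : (Set.Icc (0:ℝ) (-σ₀)) × Bool,
      ‖(if i.2 then 𝒯 i.1 else 𝒯₂ i.1)‖ ≤ M0 := by
    apply banach_steinhaus
    intro x
    obtain ⟨C1, hC1⟩ := isCompact_Icc.exists_bound_of_continuousOn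
      ((h𝒯sg.2.2 x).mono (Set.Icc_subset_Ici_self : Set.Icc (0:ℝ) (-σ₀) ⊆ Set.Ici 0))
    obtain ⟨C2, hC2⟩ := isCompact_Icc.exists_bound_of_continuousOn
      ((h𝒯₂sg.2.2 x).mono (Set.Icc_subset_Ici_self : Set.Icc (0:ℝ) (-σ₀) ⊆ Set.Ici 0))
    refine ⟨max C1 C2, fun i => ?_⟩
    rcases i with ⟨⟨s, hs⟩, b⟩
    cases b
    · simpa using (hC2 s hs).trans (le_max_right _ _)
    · simpa using (hC1 s hs).trans (le_max_left _ _)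
  obtain ⟨M0, hM0⟩ := hbdd
  set M : ℝ := max M0 1 with hM_def
  have hM1 : (1:ℝ) ≤ M := le_max_right _ _
  have hM : ∀ s ∈ Set.Icc (0:ℝ) (-σ₀), ‖𝒯 s‖ ≤ M ∧ ‖𝒯₂ s‖ ≤ M := by
    intro s hs
    constructor
    · exact le_trans (by simpa using hM0 ⟨⟨s, hs⟩, true⟩) (le_max_left _ _)
    · exact le_trans (by simpa using hM0 ⟨⟨s, hs⟩, false⟩) (le_max_left _ _)
  refine ⟨2 * M * κ, by positivity, ?_⟩
  intro q _ F F' _ _ _ t ht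
  obtain ⟨ht0, hta⟩ := ht
  -- the difference function
  set W : ℝ → H := fun s => (𝒯 (max s 0) q).1 - (𝒯₂ (max s 0) q).1 with hW_def
  have hWcont : Continuous W := by
    have hmax : Continuous fun s : ℝ => max s 0 := continuous_id.max continuous_const
    have hmem : ∀ s : ℝ, max s 0 ∈ Set.Ici (0:ℝ) := fun s => Set.mem_Ici.mpr (le_max_right _ _)
    have h1 : Continuous fun s : ℝ => 𝒯 (max s 0) q :=
      (h𝒯sg.2.2 q).comp_continuous hmax hmem
    have h2 : Continuous fun s : ℝ => 𝒯₂ (max s 0) q :=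
      (h𝒯₂sg.2.2 q).comp_continuous hmax hmem
    exact (h1.fst).sub (h2.fst)
  have hW0 : ∀ s : ℝ, s ≤ 0 → W s = 0 := by
    intro s hs
    simp only [hW_def, max_eq_right hs, h𝒯sg.1, h𝒯₂sg.1]
    simp
  have hWb : ∀ s : ℝ, 0 ≤ s → s ≤ -σ₀ → ‖W s‖ ≤ 2 * M * ‖q‖ := by
    intro s h0 hs
    have hMs := hM s ⟨h0, hs⟩
    have h1 : ‖(𝒯 s q).1‖ ≤ M * ‖q‖ :=
      le_trans (norm_fst_le _) ((𝒯 s).le_of_opNorm_le hMs.1 q)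
    have h2 : ‖(𝒯₂ s q).1‖ ≤ M * ‖q‖ :=
      le_trans (norm_fst_le _) ((𝒯₂ s).le_of_opNorm_le hMs.2 q)
    calc ‖W s‖ = ‖(𝒯 s q).1 - (𝒯₂ s q).1‖ := by rw [hW_def]; simp [max_eq_left h0]
      _ ≤ ‖(𝒯 s q).1‖ + ‖(𝒯₂ s q).1‖ := norm_sub_le _ _
      _ ≤ M * ‖q‖ + M * ‖q‖ := add_le_add h1 h2
      _ = 2 * M * ‖q‖ := by ring
  set h : ℝ → H := fun σ => k σ (W (t + σ)) with hh_def
  have hsm : StronglyMeasurable h :=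
    sm_apply_cont k hkmeas (hWcont.comp (continuous_const.add continuous_id))
  have hdiff : ∀ σ, k σ (histFun p 𝒯 q F t σ) - k σ (histFun p 𝒯₂ q F t σ) = h σ := by
    intro σ
    by_cases hσ : 0 < t + σ
    · simp only [histFun, if_pos hσ, hh_def, hW_def, max_eq_left hσ.le, ← map_sub]
    · simp only [histFun, if_neg hσ, hh_def, sub_self, hW0 _ (not_lt.mp hσ), map_zero]
  -- a.e. pointwise bound
  have hae : ∀ᵐ σ ∂μ, σ ∈ Set.Icc (-1:ℝ) 0 := mem_ae_iff.mpr hμsupp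
  have hbound : ∀ᵐ σ ∂μ, ‖h σ‖ ≤
      Set.indicator (Set.Ioc (-t) 0) (fun _ => 2 * M * ‖q‖) σ := by
    filter_upwards [hae] with σ hσ
    by_cases hσt : 0 < t + σ
    · have hmem : σ ∈ Set.Ioc (-t) 0 := ⟨by linarith, hσ.2⟩
      rw [Set.indicator_of_mem hmem]
      have hWle : ‖W (t + σ)‖ ≤ 2 * M * ‖q‖ :=
        hWb (t + σ) hσt.le (by have := hσ.2; linarith)
      calc ‖h σ‖ ≤ 1 * ‖W (t + σ)‖ := (k σ).le_of_opNorm_le (hknorm σ) _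
        _ ≤ 2 * M * ‖q‖ := by simpa using hWle
    · have : h σ = 0 := by
        simp [hh_def, hW0 _ (not_lt.mp hσt)]
      rw [this, norm_zero]
      exact Set.indicator_nonneg (fun _ _ => by positivity) σ
  have hIndInt : Integrable
      (Set.indicator (Set.Ioc (-t) 0) (fun _ => 2 * M * ‖q‖)) μ :=
    (integrable_const _).indicator measurableSet_Ioc
  have hInt : Integrable h μ :=
    hIndInt.mono' hsm.aestronglyMeasurable hbound
  -- bound on the measure of `(-t, 0]`
  have hμt : (μ (Set.Ioc (-t) 0)).toReal ≤ κ * t := by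
    have hsub : Set.Ioc (-t) 0 ∩ Set.Icc σ₀ 0 = Set.Ioc (-t) 0 := by
      apply Set.inter_eq_left.mpr
      intro x hx
      exact ⟨le_trans (by linarith) hx.1.le, hx.2⟩
    have hle := habs (Set.Ioc (-t) 0) measurableSet_Ioc
    rw [hsub] at hle
    have hvol : volume (Set.Ioc (-t) 0) = ENNReal.ofReal t := by
      rw [Real.volume_Ioc]; norm_num
    rw [hvol, ← ENNReal.ofReal_mul hκ.le] at hle
    exact ENNReal.toReal_le_of_le_ofReal (by positivity) hle
  have hmaxq : max ‖q.2‖ ‖q.1‖ = ‖q‖ := by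
    rw [Prod.norm_def, max_comm]
  have hrhs : (0:ℝ) ≤ 2 * M * κ * t * max ‖q.2‖ ‖q.1‖ := by
    have : (0:ℝ) ≤ max ‖q.2‖ ‖q.1‖ := le_max_of_le_left (norm_nonneg _)
    positivity
  by_cases hint : Integrable (fun σ => k σ (histFun p 𝒯 q F t σ)) μ
  · have hφ2 : Integrable (fun σ => k σ (histFun p 𝒯₂ q F t σ)) μ := by
      have heq : (fun σ => k σ (histFun p 𝒯₂ q F t σ))
          = fun σ => k σ (histFun p 𝒯 q F t σ) - h σ := by
        funext σ; rw [← hdiff σ]; abel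
      rw [heq]; exact hint.sub hInt
    have hkey : Phi μ k (histFun p 𝒯 q F t) - Phi μ k (histFun p 𝒯₂ q F t)
        = ∫ σ, h σ ∂μ := by
      simp only [Phi]
      rw [← integral_sub hint hφ2]
      exact integral_congr_ae (Eventually.of_forall hdiff)
    rw [hkey]
    calc ‖∫ σ, h σ ∂μ‖
        ≤ ∫ σ, Set.indicator (Set.Ioc (-t) 0) (fun _ => 2 * M * ‖q‖) σ ∂μ :=
          norm_integral_le_of_norm_le hIndInt hbound
      _ = (μ (Set.Ioc (-t) 0)).toReal * (2 * M * ‖q‖) := by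
          rw [integral_indicator_const _ measurableSet_Ioc, smul_eq_mul]; rfl
      _ ≤ (κ * t) * (2 * M * ‖q‖) := by
          apply mul_le_mul_of_nonneg_right hμt
          positivity
      _ = 2 * M * κ * t * max ‖q.2‖ ‖q.1‖ := by rw [hmaxq]; ring
  · have hφ2 : ¬ Integrable (fun σ => k σ (histFun p 𝒯₂ q F t σ)) μ := by
      intro hc
      apply hint
      have heq : (fun σ => k σ (histFun p 𝒯 q F t σ))
          = fun σ => k σ (histFun p 𝒯₂ q F t σ) + h σ := by
        funext σ; rw [← hdiff σ]; abel
      rw [heq]; exact hc.add hInt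
    simp only [Phi]
    rw [integral_undef hint, integral_undef hφ2, sub_zero, norm_zero]
    exact hrhs

end
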